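/- (Multi-layered inequality.) Let n ≥ r ≥ 0 be integers and let F_1, …, F_s ⊆ 2^[n] be cross-dependent families. Let k_1, …, k_s be nonnegative integers satisfying k_1 + … + k_s + r = n. Then Σ_{j=0}^{r} Σ_{i=1}^{s} φ_i(k_i + j) ≤ (r+1)(s−1). -/

import Mathlib

open Finset

/-- `φ(ℓ)` for a family `F ⊆ 2^[n]`: the fraction `|F^(ℓ)| / C(n, ℓ)` of
`ℓ`-element subsets of `[n]` belonging to `F`. -/
noncomputable def phi (n : ℕ) (F : Finset (Finset ℕ)) (ℓ : ℕ) : ℝ :=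
  ((F.filter fun A => A.card = ℓ).card : ℝ) / (n.choose ℓ : ℝ)

/-- Families `F 1, …, F s` are cross-dependent if one cannot pick `f i ∈ F i`
with the `f i` pairwise disjoint. -/
def CrossDep {s : ℕ} (F : Fin s → Finset (Finset ℕ)) : Prop :=
  ¬ ∃ f : Fin s → Finset ℕ, (∀ i, f i ∈ F i) ∧
      Pairwise fun i j => Disjoint (f i) (f j)

namespace ML
variable {n : ℕ}

def ext (σ : Equiv.Perm (Fin n)) (x : ℕ) : ℕ :=
  if h : x < n then (σ ⟨x, h⟩ : ℕ) else x

def pimg (σ : Equiv.Perm (Fin n)) (B : Finset ℕ) : Finset ℕ :=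
  B.image (ext σ)

-- (assume part1 lemmas available; restated here for this test)
lemma ext_lt (σ : Equiv.Perm (Fin n)) {x : ℕ} (h : x < n) : ext σ x < n := by
  simp only [ext, dif_pos h]; exact (σ ⟨x, h⟩).isLt

lemma ext_injOn (σ : Equiv.Perm (Fin n)) : Set.InjOn (ext σ) {x | x < n} := by
  intro x hx y hy hxy
  simp only [Set.mem_setOf_eq] at hx hy
  simp only [ext, dif_pos hx, dif_pos hy] at hxy
  exact congrArg Fin.val (σ.injective (Fin.val_injective hxy))

lemma pimg_subset_range (σ : Equiv.Perm (Fin n)) {B : Finset ℕ}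
    (hB : B ⊆ range n) : pimg σ B ⊆ range n := by
  intro y hy
  rcases mem_image.1 hy with ⟨x, hx, rfl⟩
  exact mem_range.2 (ext_lt σ (mem_range.1 (hB hx)))

lemma pimg_card (σ : Equiv.Perm (Fin n)) {B : Finset ℕ}
    (hB : B ⊆ range n) : (pimg σ B).card = B.card := by
  apply Finset.card_image_of_injOn
  intro x hx y hy hxy
  exact ext_injOn σ (mem_range.1 (hB hx)) (mem_range.1 (hB hy)) hxy

lemma pimg_disjoint (σ : Equiv.Perm (Fin n)) {B C : Finset ℕ}
    (hB : B ⊆ range n) (hC : C ⊆ range n) (h : Disjoint B C) :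
    Disjoint (pimg σ B) (pimg σ C) := by
  rw [Finset.disjoint_left]
  intro y hyB hyC
  rcases mem_image.1 hyB with ⟨x, hx, rfl⟩
  rcases mem_image.1 hyC with ⟨x', hx', hxx'⟩
  have : x' = x := ext_injOn σ (mem_range.1 (hC hx')) (mem_range.1 (hB hx)) hxx'
  subst this
  exact (Finset.disjoint_left.1 h) hx hx'

lemma pimg_trans (σ π : Equiv.Perm (Fin n)) {B : Finset ℕ}
    (hB : B ⊆ range n) : pimg (σ.trans π) B = pimg π (pimg σ B) := by
  unfold pimg
  rw [Finset.image_image]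
  apply Finset.image_congr
  intro x hx
  have hx' : x < n := mem_range.1 (hB hx)
  simp only [Function.comp_apply, ext, dif_pos hx']
  have h2 : ((σ ⟨x, hx'⟩ : Fin n) : ℕ) < n := (σ ⟨x, hx'⟩).isLt
  simp only [dif_pos h2, Equiv.trans_apply]

lemma pimg_one {B : Finset ℕ} (hB : B ⊆ range n) :
    pimg (Equiv.refl (Fin n)) B = B := by
  unfold pimg
  rw [Finset.image_congr (g := id), Finset.image_id]
  intro x hx
  simp only [ext, dif_pos (mem_range.1 (hB hx)), id]
  rfl

/-- permutation mapping one subset of `range n` to another of the same size -/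
lemma exists_perm_map {A A' : Finset ℕ} (hA : A ⊆ range n) (hA' : A' ⊆ range n)
    (hc : A.card = A'.card) : ∃ π : Equiv.Perm (Fin n), pimg π A = A' := by
  classical
  set FA : Finset (Fin n) := univ.filter (fun x => (x : ℕ) ∈ A) with hFA
  set FA' : Finset (Fin n) := univ.filter (fun x => (x : ℕ) ∈ A') with hFA'
  have himg : ∀ (S : Finset ℕ), S ⊆ range n →
      (univ.filter (fun x : Fin n => (x : ℕ) ∈ S)).image Fin.val = S := by
    intro S hS
    ext y
    simp only [mem_image, mem_filter, mem_univ, true_and]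
    constructor
    · rintro ⟨x, hx, rfl⟩; exact hx
    · intro hy
      exact ⟨⟨y, mem_range.1 (hS hy)⟩, hy, rfl⟩
  have hcard : ∀ (S : Finset ℕ), S ⊆ range n →
      (univ.filter (fun x : Fin n => (x : ℕ) ∈ S)).card = S.card := by
    intro S hS
    conv_rhs => rw [← himg S hS]
    exact (Finset.card_image_of_injective _ Fin.val_injective).symm
  have hc1 : FA.card = FA'.card := by
    rw [hcard A hA, hcard A' hA', hc]
  have hc2 : FAᶜ.card = FA'ᶜ.card := by
    rw [Finset.card_compl, Finset.card_compl, hc1]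
  let e1 : {x // x ∈ FA} ≃ {x // x ∈ FA'} := Finset.equivOfCardEq hc1
  let e2 : {x // ¬ x ∈ FA} ≃ {x // ¬ x ∈ FA'} :=
    ((Equiv.subtypeEquivRight (fun x => (Finset.mem_compl (s := FA)).symm)).trans
      (Finset.equivOfCardEq hc2)).trans
      (Equiv.subtypeEquivRight (fun x => (Finset.mem_compl (s := FA'))))
  let π : Equiv.Perm (Fin n) :=
    ((Equiv.sumCompl (· ∈ FA)).symm.trans (e1.sumCongr e2)).trans
      (Equiv.sumCompl (· ∈ FA'))
  have hπ : ∀ z : Fin n, z ∈ FA → π z ∈ FA' := by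
    intro z hz
    have h1 : (Equiv.sumCompl (· ∈ FA)).symm z = Sum.inl ⟨z, hz⟩ := by
      rw [Equiv.symm_apply_eq, Equiv.sumCompl_apply_inl]
    simp only [π, Equiv.trans_apply, h1, Equiv.sumCongr_apply, Sum.map_inl,
      Equiv.sumCompl_apply_inl]
    exact (e1 ⟨z, hz⟩).2
  refine ⟨π, ?_⟩
  have hsub : pimg π A ⊆ A' := by
    intro y hy
    rcases mem_image.1 hy with ⟨x, hx, rfl⟩
    have hxn : x < n := mem_range.1 (hA hx)
    have hmem : (⟨x, hxn⟩ : Fin n) ∈ FA := by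
      simp only [hFA, mem_filter, mem_univ, true_and]; exact hx
    have := hπ _ hmem
    simp only [hFA', mem_filter, mem_univ, true_and] at this
    simpa only [ext, dif_pos hxn] using this
  apply Finset.eq_of_subset_of_card_le hsub
  rw [pimg_card π hA, hc]

end ML

namespace ML2
open ML

lemma count_key {n : ℕ} {B : Finset ℕ} (hB : B ⊆ range n)
    (F : Finset (Finset ℕ)) (hF : ∀ A ∈ F, A ⊆ range n) :
    (n.choose B.card) * (univ.filter (fun σ : Equiv.Perm (Fin n) => pimg σ B ∈ F)).card
      = n.factorial * (F.filter (fun A => A.card = B.card)).card := by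
  classical
  set m := B.card with hm
  set pc := powersetCard m (range n) with hpc
  have hBpc : B ∈ pc := mem_powersetCard.2 ⟨hB, rfl⟩
  set fib : Finset ℕ → ℕ :=
    fun A => (univ.filter (fun σ : Equiv.Perm (Fin n) => pimg σ B = A)).card with hfib
  -- fibers are constant on pc
  have hconst : ∀ A ∈ pc, ∀ A' ∈ pc, fib A = fib A' := by
    intro A hA A' hA'
    rcases mem_powersetCard.1 hA with ⟨hAsub, hAcard⟩
    rcases mem_powersetCard.1 hA' with ⟨hA'sub, hA'card⟩
    obtain ⟨π, hπ⟩ := exists_perm_map hAsub hA'sub (hAcard.trans hA'card.symm)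
    have hπ' : pimg π.symm A' = A := by
      rw [← hπ, ← pimg_trans π π.symm hAsub, Equiv.self_trans_symm, pimg_one hAsub]
    refine Finset.card_bij' (fun σ _ => σ.trans π) (fun σ _ => σ.trans π.symm)
      ?_ ?_ ?_ ?_
    · intro σ hσ
      rw [mem_filter] at hσ ⊢
      refine ⟨mem_univ _, ?_⟩
      rw [pimg_trans σ π hB, hσ.2, hπ]
    · intro σ hσ
      rw [mem_filter] at hσ ⊢
      refine ⟨mem_univ _, ?_⟩
      rw [pimg_trans σ π.symm hB, hσ.2, hπ']
    · intro σ _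
      ext x; simp
    · intro σ _
      ext x; simp
  -- total over pc
  have htot : ∑ A ∈ pc, fib A = n.factorial := by
    have := Finset.card_eq_sum_card_fiberwise
      (f := fun σ : Equiv.Perm (Fin n) => pimg σ B) (s := univ) (t := pc)
      (fun σ _ => mem_powersetCard.2 ⟨pimg_subset_range σ hB, pimg_card σ hB⟩)
    rw [← this, card_univ, Fintype.card_perm, Fintype.card_fin]
  have hchoose : ∀ A ∈ pc, (n.choose m) * fib A = n.factorial := by
    intro A hA
    have : ∑ A' ∈ pc, fib A' = pc.card * fib A := by
      rw [Finset.sum_congr rfl (fun A' hA' => hconst A' hA' A hA), Finset.sum_const,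
        smul_eq_mul]
    rw [← htot, this, hpc, card_powersetCard, card_range]
  -- the filtered count
  set cnt := (univ.filter (fun σ : Equiv.Perm (Fin n) => pimg σ B ∈ F)).card with hcnt
  have hsplit : cnt = ∑ A ∈ pc.filter (fun A => A ∈ F), fib A := by
    have h1 := Finset.card_eq_sum_card_fiberwise
      (f := fun σ : Equiv.Perm (Fin n) => pimg σ B)
      (s := univ.filter (fun σ => pimg σ B ∈ F)) (t := pc.filter (fun A => A ∈ F))
      (by
        intro σ hσ
        rw [Finset.mem_coe, mem_filter] at hσ
        exact mem_filter.2 ⟨mem_powersetCard.2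
          ⟨pimg_subset_range σ hB, pimg_card σ hB⟩, hσ.2⟩)
    rw [hcnt, h1]
    apply Finset.sum_congr rfl
    intro A hA
    rw [mem_filter] at hA
    rw [hfib]
    congr 1
    rw [Finset.filter_filter]
    apply Finset.filter_congr
    intro σ _
    constructor
    · exact fun h => h.2
    · intro h; exact ⟨h ▸ hA.2, h⟩
  have hcard2 : pc.filter (fun A => A ∈ F) = F.filter (fun A => A.card = m) := by
    ext A
    simp only [mem_filter, hpc, mem_powersetCard]
    constructor
    · rintro ⟨⟨_, hc⟩, hAF⟩; exact ⟨hAF, hc⟩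
    · rintro ⟨hAF, hc⟩; exact ⟨⟨hF A hAF, hc⟩, hAF⟩
  calc (n.choose m) * cnt = ∑ A ∈ pc.filter (fun A => A ∈ F), (n.choose m) * fib A := by
        rw [hsplit, Finset.mul_sum]
    _ = ∑ A ∈ pc.filter (fun A => A ∈ F), n.factorial := by
        apply Finset.sum_congr rfl
        intro A hA
        exact hchoose A (mem_filter.1 hA).1
    _ = (F.filter (fun A => A.card = m)).card * n.factorial := by
        rw [Finset.sum_const, smul_eq_mul, hcard2]
    _ = n.factorial * (F.filter (fun A => A.card = m)).card := mul_comm _ _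

end ML2


namespace ML3
open ML ML2

/-- the k = 0 statement on ground `range r` -/
def Kprop (s r : ℕ) : Prop :=
  ∀ H : Fin s → Finset (Finset ℕ), (∀ i, ∀ A ∈ H i, A ⊆ range r) → CrossDep H →
    ∑ ℓ ∈ range (r+1), ∑ i, phi r (H i) ℓ ≤ ((s:ℝ)-1) * ((r:ℝ)+1)

lemma phi_nonneg (n : ℕ) (F : Finset (Finset ℕ)) (ℓ : ℕ) : 0 ≤ phi n F ℓ := by
  unfold phi
  positivity

lemma phi_le_one {n : ℕ} {F : Finset (Finset ℕ)} (hF : ∀ A ∈ F, A ⊆ range n) (ℓ : ℕ) :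
    phi n F ℓ ≤ 1 := by
  unfold phi
  rcases Nat.eq_zero_or_pos (n.choose ℓ) with h | h
  · rw [h]
    norm_num
  · rw [div_le_one (by exact_mod_cast h)]
    have : F.filter (fun A => A.card = ℓ) ⊆ powersetCard ℓ (range n) := by
      intro A hA
      rw [mem_filter] at hA
      exact mem_powersetCard.2 ⟨hF A hA.1, hA.2⟩
    have := Finset.card_le_card this
    rw [card_powersetCard, card_range] at this
    exact_mod_cast this

lemma reduction {s n r : ℕ} (k : Fin s → ℕ) (hk : (∑ i, k i) + r = n)
    (hKr : Kprop s r)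
    (F : Fin s → Finset (Finset ℕ)) (hsub : ∀ i, ∀ A ∈ F i, A ⊆ range n)
    (hcross : CrossDep F) :
    ∑ j ∈ range (r+1), ∑ i, phi n (F i) (k i + j) ≤ ((s:ℝ)-1) * ((r:ℝ)+1) := by
  classical
  set M := ∑ i, k i with hM
  set a : Fin s → ℕ := fun i => ∑ t ∈ univ.filter (fun t => t < i), k t with ha
  set block : Fin s → Finset ℕ := fun i => (range (k i)).image (· + a i) with hblock
  set shape : Fin s → Finset ℕ → Finset ℕ := fun i U => block i ∪ U.image (· + M)
    with hshape
  have hak : ∀ i, a i + k i ≤ M := by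
    intro i
    have hsub2 : insert i (univ.filter (fun t => t < i)) ⊆ univ := fun t _ => mem_univ t
    have hnm : i ∉ univ.filter (fun t => t < i) := by
      simp [lt_irrefl]
    calc a i + k i = ∑ t ∈ insert i (univ.filter (fun t => t < i)), k t := by
          rw [Finset.sum_insert hnm]; ring
      _ ≤ M := Finset.sum_le_sum_of_subset hsub2
  have hablock : ∀ i j : Fin s, i < j → a i + k i ≤ a j := by
    intro i j hij
    have hnm : i ∉ univ.filter (fun t => t < i) := by simp [lt_irrefl]
    have hsub2 : insert i (univ.filter (fun t => t < i)) ⊆ univ.filter (fun t => t < j) := by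
      intro t ht
      rcases Finset.mem_insert.1 ht with rfl | ht
      · exact mem_filter.2 ⟨mem_univ _, hij⟩
      · exact mem_filter.2 ⟨mem_univ _, lt_trans (mem_filter.1 ht).2 hij⟩
    calc a i + k i = ∑ t ∈ insert i (univ.filter (fun t => t < i)), k t := by
          rw [Finset.sum_insert hnm]; ring
      _ ≤ a j := Finset.sum_le_sum_of_subset hsub2
  have hblock_lt : ∀ i, ∀ x ∈ block i, x < a i + k i := by
    intro i x hx
    rcases mem_image.1 hx with ⟨y, hy, rfl⟩
    have := mem_range.1 hy
    omega
  have hblock_ge : ∀ i, ∀ x ∈ block i, a i ≤ x := by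
    intro i x hx
    rcases mem_image.1 hx with ⟨y, hy, rfl⟩
    omega
  have hshape_sub : ∀ i, ∀ U ⊆ range r, shape i U ⊆ range n := by
    intro i U hU x hx
    rcases Finset.mem_union.1 hx with hx | hx
    · have := hblock_lt i x hx
      have := hak i
      rw [mem_range]; omega
    · rcases mem_image.1 hx with ⟨y, hy, rfl⟩
      have := mem_range.1 (hU hy)
      rw [mem_range]; omega
  have hshape_card : ∀ i, ∀ U ⊆ range r, (shape i U).card = k i + U.card := by
    intro i U hU
    rw [hshape]
    rw [Finset.card_union_of_disjoint]
    · congr 1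
      · rw [hblock, Finset.card_image_of_injective _ (add_left_injective _), card_range]
      · exact Finset.card_image_of_injective _ (add_left_injective _)
    · rw [Finset.disjoint_left]
      intro x hx hx'
      have h1 := hblock_lt i x hx
      have h2 := hak i
      rcases mem_image.1 hx' with ⟨y, hy, rfl⟩
      omega
  have hshape_disj : ∀ i j : Fin s, i ≠ j → ∀ U U' : Finset ℕ, Disjoint U U' →
      Disjoint (shape i U) (shape j U') := by
    intro i j hij U U' hUU
    rw [Finset.disjoint_left]
    intro x hx hx'
    rcases Finset.mem_union.1 hx with hx | hx <;> rcases Finset.mem_union.1 hx' with hx' | hx'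
    · rcases lt_or_gt_of_ne hij with h | h
      · have := hablock i j h
        have := hblock_lt i x hx
        have := hblock_ge j x hx'
        omega
      · have := hablock j i h
        have := hblock_lt j x hx'
        have := hblock_ge i x hx
        omega
    · have := hblock_lt i x hx
      have := hak i
      rcases mem_image.1 hx' with ⟨y, hy, rfl⟩
      omega
    · have := hblock_lt j x hx'
      have := hak j
      rcases mem_image.1 hx with ⟨y, hy, rfl⟩
      omega
    · rcases mem_image.1 hx with ⟨y, hy, rfl⟩
      rcases mem_image.1 hx' with ⟨y', hy', he⟩
      have : y' = y := by omega
      subst this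
      exact (Finset.disjoint_left.1 hUU) hy hy'
  set H : Equiv.Perm (Fin n) → Fin s → Finset (Finset ℕ) :=
    fun σ i => (range r).powerset.filter (fun U => pimg σ (shape i U) ∈ F i) with hH
  have hHsub : ∀ σ, ∀ i, ∀ A ∈ H σ i, A ⊆ range r := by
    intro σ i A hA
    exact Finset.mem_powerset.1 (mem_filter.1 hA).1
  have hHcross : ∀ σ, CrossDep (H σ) := by
    intro σ hex
    rcases hex with ⟨f, hf, hpw⟩
    apply hcross
    refine ⟨fun i => pimg σ (shape i (f i)), fun i => (mem_filter.1 (hf i)).2, ?_⟩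
    intro i j hij
    exact pimg_disjoint σ (hshape_sub i _ (Finset.mem_powerset.1 (mem_filter.1 (hf i)).1))
      (hshape_sub j _ (Finset.mem_powerset.1 (mem_filter.1 (hf j)).1))
      (hshape_disj i j hij _ _ (hpw hij))
  -- pointwise bound
  have hpt : ∀ σ : Equiv.Perm (Fin n),
      ∑ ℓ ∈ range (r+1), ∑ i, phi r (H σ i) ℓ ≤ ((s:ℝ)-1) * ((r:ℝ)+1) :=
    fun σ => hKr (H σ) (hHsub σ) (hHcross σ)
  -- the key expectation identity
  have hkey : ∀ (i : Fin s), ∀ j ∈ range (r+1),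
      ∑ σ : Equiv.Perm (Fin n), phi r (H σ i) j
        = (n.factorial : ℝ) * phi n (F i) (k i + j) := by
    intro i j hj
    have hjr : j ≤ r := Nat.lt_succ_iff.1 (mem_range.1 hj)
    have hfilt : ∀ σ : Equiv.Perm (Fin n), (H σ i).filter (fun A => A.card = j)
        = (powersetCard j (range r)).filter (fun U => pimg σ (shape i U) ∈ F i) := by
      intro σ
      rw [hH, powersetCard_eq_filter, filter_filter, filter_filter]
      apply Finset.filter_congr
      intro U _
      simp [and_comm]
    have hcnt : ∀ U ∈ powersetCard j (range r),
        ((univ.filter (fun σ : Equiv.Perm (Fin n) => pimg σ (shape i U) ∈ F i)).card : ℝ)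
          = (n.factorial : ℝ) * phi n (F i) (k i + j) := by
      intro U hU
      rcases mem_powersetCard.1 hU with ⟨hUsub, hUcard⟩
      have hBsub : shape i U ⊆ range n := hshape_sub i U hUsub
      have hBcard : (shape i U).card = k i + j := by
        rw [hshape_card i U hUsub, hUcard]
      have h0 := count_key hBsub (F i) (hsub i)
      rw [hBcard] at h0
      have hkn : k i + j ≤ n := by
        have h1 : k i ≤ M := by
          have := hak i; omega
        omega
      have hchoosepos : 0 < n.choose (k i + j) := Nat.choose_pos hkn
      have hcast : ((n.choose (k i + j) : ℝ)) *
          ((univ.filter (fun σ : Equiv.Perm (Fin n) => pimg σ (shape i U) ∈ F i)).card : ℝ)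
          = (n.factorial : ℝ) * (((F i).filter (fun A => A.card = k i + j)).card : ℝ) := by
        exact_mod_cast congrArg (Nat.cast : ℕ → ℝ) h0
      unfold phi
      have hne : ((n.choose (k i + j) : ℝ)) ≠ 0 := by exact_mod_cast hchoosepos.ne'
      field_simp
      linear_combination hcast
    calc ∑ σ : Equiv.Perm (Fin n), phi r (H σ i) j
        = ∑ σ : Equiv.Perm (Fin n),
            (((powersetCard j (range r)).filter
              (fun U => pimg σ (shape i U) ∈ F i)).card : ℝ) / (r.choose j : ℝ) := by
          apply Finset.sum_congr rfl
          intro σ _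
          unfold phi
          rw [hfilt σ]
      _ = (∑ U ∈ powersetCard j (range r),
            ((univ.filter (fun σ : Equiv.Perm (Fin n) =>
              pimg σ (shape i U) ∈ F i)).card : ℝ)) / (r.choose j : ℝ) := by
          rw [← Finset.sum_div]
          congr 1
          have : ∀ σ : Equiv.Perm (Fin n),
              (((powersetCard j (range r)).filter
                (fun U => pimg σ (shape i U) ∈ F i)).card : ℝ)
              = ∑ U ∈ powersetCard j (range r),
                  (if pimg σ (shape i U) ∈ F i then (1:ℝ) else 0) := by
            intro σ
            exact (Finset.sum_boole _ _).symm
          rw [Finset.sum_congr rfl (fun σ _ => this σ), Finset.sum_comm]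
          apply Finset.sum_congr rfl
          intro U _
          rw [Finset.sum_boole]
      _ = (n.factorial : ℝ) * phi n (F i) (k i + j) := by
          rw [Finset.sum_congr rfl hcnt, Finset.sum_const, nsmul_eq_mul,
            card_powersetCard, card_range]
          have hchoosepos : 0 < r.choose j := Nat.choose_pos hjr
          have hne : ((r.choose j : ℝ)) ≠ 0 := by exact_mod_cast hchoosepos.ne'
          field_simp
  -- sum the pointwise bound over σ
  have hsum : (n.factorial : ℝ) * (∑ j ∈ range (r+1), ∑ i, phi n (F i) (k i + j))
      ≤ (n.factorial : ℝ) * (((s:ℝ)-1) * ((r:ℝ)+1)) := by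
    have h1 : ∑ σ : Equiv.Perm (Fin n), ∑ ℓ ∈ range (r+1), ∑ i, phi r (H σ i) ℓ
        ≤ ∑ _σ : Equiv.Perm (Fin n), ((s:ℝ)-1) * ((r:ℝ)+1) :=
      Finset.sum_le_sum (fun σ _ => hpt σ)
    rw [Finset.sum_const, card_univ, Fintype.card_perm, Fintype.card_fin,
      nsmul_eq_mul] at h1
    have h2 : ∑ σ : Equiv.Perm (Fin n), ∑ ℓ ∈ range (r+1), ∑ i, phi r (H σ i) ℓ
        = (n.factorial : ℝ) * ∑ j ∈ range (r+1), ∑ i, phi n (F i) (k i + j) := by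
      rw [Finset.sum_comm]
      rw [Finset.mul_sum]
      apply Finset.sum_congr rfl
      intro ℓ hℓ
      rw [Finset.sum_comm, Finset.mul_sum]
      apply Finset.sum_congr rfl
      intro i _
      exact hkey i ℓ hℓ
    linarith [h1, h2.symm.trans_le h1]
  have hfac : (0:ℝ) < (n.factorial : ℝ) := by
    exact_mod_cast Nat.factorial_pos n
  exact le_of_mul_le_mul_left (by linarith [hsum]) hfac

end ML3



namespace ML4
open ML ML2 ML3

lemma phi_empty (n ℓ : ℕ) : phi n (∅ : Finset (Finset ℕ)) ℓ = 0 := by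
  unfold phi
  simp

theorem Kthm : ∀ s r : ℕ, Kprop s r := by
  intro s
  induction s with
  | zero =>
    intro r H hsub hcross
    exact absurd ⟨Fin.elim0, fun i => i.elim0, fun i => i.elim0⟩ hcross
  | succ s IHs =>
    intro r
    induction r with
    | zero =>
      intro H hsub hcross
      have hex : ∃ i0 : Fin (s+1), ∅ ∉ H i0 := by
        by_contra h
        push_neg at h
        exact hcross ⟨fun _ => ∅, h, fun i j _ => Finset.disjoint_empty_left _⟩
      rcases hex with ⟨i0, hi0⟩
      have hz : phi 0 (H i0) 0 = 0 := by
        unfold phi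
        convert zero_div _
        rw [Nat.cast_eq_zero, Finset.card_eq_zero, Finset.filter_eq_empty_iff]
        intro A hA hc
        rw [Finset.card_eq_zero] at hc
        exact hi0 (hc ▸ hA)
      rw [Finset.sum_range_one, Fin.sum_univ_succAbove _ i0, hz, zero_add]
      have h1 : ∑ z : Fin s, phi 0 (H (i0.succAbove z)) 0 ≤ ∑ _z : Fin s, (1:ℝ) :=
        Finset.sum_le_sum (fun z _ => phi_le_one (hsub _) 0)
      rw [Finset.sum_const, card_univ, Fintype.card_fin, nsmul_eq_mul, mul_one] at h1
      push_cast
      linarith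
    | succ r IHr =>
      intro H hsub hcross
      by_cases hcaseA : ∃ i0 : Fin (s+1), H i0 = ∅
      · rcases hcaseA with ⟨i0, hi0⟩
        have hbound : ∀ ℓ ∈ range (r+1+1), ∑ i, phi (r+1) (H i) ℓ ≤ (s:ℝ) := by
          intro ℓ _
          rw [Fin.sum_univ_succAbove _ i0, hi0, phi_empty, zero_add]
          have h1 : ∑ z : Fin s, phi (r+1) (H (i0.succAbove z)) ℓ ≤ ∑ _z : Fin s, (1:ℝ) :=
            Finset.sum_le_sum (fun z _ => phi_le_one (hsub _) ℓ)
          rw [Finset.sum_const, card_univ, Fintype.card_fin, nsmul_eq_mul, mul_one] at h1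
          linarith
        have h2 := Finset.sum_le_sum hbound
        rw [Finset.sum_const, Finset.card_range, nsmul_eq_mul] at h2
        push_cast at h2 ⊢
        linarith
      push_neg at hcaseA
      by_cases hcaseB : ∃ i0 : Fin (s+1), ∅ ∈ H i0
      · rcases hcaseB with ⟨i0, hi0⟩
        classical
        set H' : Fin s → Finset (Finset ℕ) := fun z => H (i0.succAbove z) with hH'
        have hsub' : ∀ z, ∀ A ∈ H' z, A ⊆ range (r+1) := fun z => hsub _
        have hcross' : CrossDep H' := by
          rintro ⟨f', hf', hpw'⟩
          apply hcross
          have hchoice : ∀ i : Fin (s+1), i ≠ i0 → ∃ z : Fin s, i0.succAbove z = i :=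
            fun i h => Fin.exists_succAbove_eq h
          choose g hg using hchoice
          refine ⟨fun i => if h : i = i0 then ∅ else f' (g i h), ?_, ?_⟩
          · intro i
            by_cases h : i = i0
            · simp only [dif_pos h]; exact h ▸ hi0
            · simp only [dif_neg h]
              have h3 := hg i h
              revert h3
              generalize g i h = z
              intro h3
              rw [← h3]
              have h2 := hf' z
              rw [hH'] at h2
              exact h2
          · intro i j hij
            by_cases hi : i = i0
            · simp only [dif_pos hi]; exact Finset.disjoint_empty_left _
            by_cases hj : j = i0
            · simp only [dif_neg hi, dif_pos hj]; exact Finset.disjoint_empty_right _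
            simp only [dif_neg hi, dif_neg hj]
            apply hpw'
            intro hzz
            apply hij
            rw [← hg i hi, ← hg j hj, hzz]
        have hIH := IHs (r+1) H' hsub' hcross'
        have hrow : ∑ ℓ ∈ range (r+1+1), phi (r+1) (H i0) ℓ ≤ ((r:ℝ)+2) := by
          have h1 : ∀ ℓ ∈ range (r+1+1), phi (r+1) (H i0) ℓ ≤ (1:ℝ) :=
            fun ℓ _ => phi_le_one (hsub _) ℓ
          have h2 := Finset.sum_le_sum h1
          rw [Finset.sum_const, Finset.card_range, nsmul_eq_mul, mul_one] at h2
          push_cast at h2 ⊢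
          linarith
        have hsplit : ∑ ℓ ∈ range (r+1+1), ∑ i, phi (r+1) (H i) ℓ
            = (∑ ℓ ∈ range (r+1+1), phi (r+1) (H i0) ℓ)
              + ∑ ℓ ∈ range (r+1+1), ∑ z : Fin s, phi (r+1) (H' z) ℓ := by
          rw [← Finset.sum_add_distrib]
          exact Finset.sum_congr rfl (fun ℓ _ => Fin.sum_univ_succAbove _ i0)
        rw [hsplit]
        push_cast
        push_cast at hIH
        linarith
      · -- main case : all families nonempty, none contains ∅
        push_neg at hcaseB
        classical
        set HC : Fin (s+1) → Finset (Finset ℕ) := fun i =>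
          (range (r+1)).powerset.filter (fun B => ∃ A ∈ H i, A ⊆ B) with hHC
        have hHCsub : ∀ i, ∀ A ∈ HC i, A ⊆ range (r+1) :=
          fun i A hA => Finset.mem_powerset.1 (mem_filter.1 hA).1
        have hHCcross : CrossDep HC := by
          rintro ⟨f, hf, hpw⟩
          apply hcross
          have h1 : ∀ i, ∃ A ∈ H i, A ⊆ f i := fun i => (mem_filter.1 (hf i)).2
          choose g hg1 hg2 using h1
          exact ⟨g, hg1, fun i j hij =>
            Finset.disjoint_of_subset_left (hg2 i)
              (Finset.disjoint_of_subset_right (hg2 j) (hpw hij))⟩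
        have hmono : ∀ i : Fin (s+1), ∀ ℓ ∈ range (r+1+1),
            phi (r+1) (H i) ℓ ≤ phi (r+1) (HC i) ℓ := by
          intro i ℓ hℓ
          have hℓ' : ℓ ≤ r+1 := Nat.lt_succ_iff.1 (mem_range.1 hℓ)
          have hsubf : (H i).filter (fun A => A.card = ℓ)
              ⊆ (HC i).filter (fun A => A.card = ℓ) := by
            intro A hA
            rw [mem_filter] at hA ⊢
            refine ⟨?_, hA.2⟩
            rw [hHC, mem_filter]
            exact ⟨Finset.mem_powerset.2 (hsub i A hA.1), ⟨A, hA.1, subset_rfl⟩⟩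
          unfold phi
          have hch : (0:ℝ) < ((r+1).choose ℓ : ℝ) := by
            exact_mod_cast Nat.choose_pos hℓ'
          rw [div_le_div_iff_of_pos_right hch]
          exact_mod_cast Finset.card_le_card hsubf
        have htop : ∀ i : Fin (s+1), phi (r+1) (HC i) (r+1) = 1 := by
          intro i
          have hne := hcaseA i
          rcases hne with ⟨A0, hA0⟩
          have hfe : (HC i).filter (fun A => A.card = r+1) = {range (r+1)} := by
            ext A
            rw [mem_filter, Finset.mem_singleton]
            constructor
            · rintro ⟨hA, hc⟩
              have h1 := hHCsub i A hA
              apply Finset.eq_of_subset_of_card_le h1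
              rw [Finset.card_range, hc]
            · rintro rfl
              refine ⟨?_, Finset.card_range _⟩
              rw [hHC, mem_filter]
              exact ⟨Finset.mem_powerset_self _, ⟨A0, hA0, hsub i A0 hA0⟩⟩
          unfold phi
          rw [hfe, Finset.card_singleton, Nat.choose_self]
          norm_num
        have hbot : ∀ i : Fin (s+1), phi (r+1) (HC i) 0 = 0 := by
          intro i
          unfold phi
          convert zero_div _
          rw [Nat.cast_eq_zero, Finset.card_eq_zero, Finset.filter_eq_empty_iff]
          intro A hA hc
          rw [Finset.card_eq_zero] at hc
          subst hc
          rcases (mem_filter.1 hA).2 with ⟨A0, hA01, hA02⟩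
          rw [Finset.subset_empty] at hA02
          exact hcaseB i (hA02 ▸ hA01)
        -- window inequalities via the reduction lemma
        have hwin : ∀ i0 : Fin (s+1),
            ∑ j ∈ range (r+1), ∑ i, phi (r+1) (HC i) ((if i = i0 then 1 else 0) + j)
              ≤ (((s+1:ℕ):ℝ)-1) * ((r:ℝ)+1) := by
          intro i0
          have hk' : (∑ i : Fin (s+1), if i = i0 then 1 else 0) + r = r+1 := by
            rw [Finset.sum_ite_eq' univ i0 (fun _ => 1), if_pos (mem_univ i0)]
            omega
          exact reduction _ hk' IHr HC hHCsub hHCcross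
        have hsplit2 : ∀ i : Fin (s+1), ∀ j : ℕ,
            ∑ i0 : Fin (s+1), phi (r+1) (HC i) ((if i = i0 then 1 else 0) + j)
              = phi (r+1) (HC i) (1+j) + (s:ℝ) * phi (r+1) (HC i) j := by
          intro i j
          rw [Fin.sum_univ_succAbove _ i]
          simp only [if_pos rfl]
          have h1 : ∀ z : Fin s, phi (r+1) (HC i) ((if i = i.succAbove z then 1 else 0) + j)
              = phi (r+1) (HC i) j := by
            intro z
            rw [if_neg (Ne.symm (Fin.succAbove_ne i z)), zero_add]
          rw [Finset.sum_congr rfl (fun z _ => h1 z), Finset.sum_const, card_univ,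
            Fintype.card_fin, nsmul_eq_mul]
          norm_num
        -- set T i := total of row i over HC
        set T : Fin (s+1) → ℝ := fun i => ∑ ℓ ∈ range (r+1+1), phi (r+1) (HC i) ℓ with hT
        have htel1 : ∀ i, ∑ j ∈ range (r+1), phi (r+1) (HC i) (1+j) = T i := by
          intro i
          have e : ∀ j ∈ range (r+1), phi (r+1) (HC i) (1+j) = phi (r+1) (HC i) (j+1) :=
            fun j _ => by rw [Nat.add_comm 1 j]
          rw [Finset.sum_congr rfl e]
          show ∑ x ∈ range (r+1), phi (r+1) (HC i) (x+1)
            = ∑ ℓ ∈ range (r+1+1), phi (r+1) (HC i) ℓ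
          rw [Finset.sum_range_succ' (fun ℓ => phi (r+1) (HC i) ℓ) (r+1)]
          rw [hbot i, add_zero]
        have htel2 : ∀ i, ∑ j ∈ range (r+1), phi (r+1) (HC i) j = T i - 1 := by
          intro i
          show ∑ j ∈ range (r+1), phi (r+1) (HC i) j
            = (∑ ℓ ∈ range (r+1+1), phi (r+1) (HC i) ℓ) - 1
          rw [Finset.sum_range_succ (fun ℓ => phi (r+1) (HC i) ℓ) (r+1)]
          rw [htop i]
          ring
        have hsum : ∑ i0 : Fin (s+1),
            (∑ j ∈ range (r+1), ∑ i, phi (r+1) (HC i) ((if i = i0 then 1 else 0) + j))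
            = ((s:ℝ)+1) * (∑ i, T i) - (s:ℝ) * ((s:ℝ)+1) := by
          rw [Finset.sum_comm]
          have h1 : ∀ j ∈ range (r+1),
              ∑ i0 : Fin (s+1), ∑ i, phi (r+1) (HC i) ((if i = i0 then 1 else 0) + j)
              = ∑ i, (phi (r+1) (HC i) (1+j) + (s:ℝ) * phi (r+1) (HC i) j) := by
            intro j _
            rw [Finset.sum_comm]
            exact Finset.sum_congr rfl (fun i _ => hsplit2 i j)
          rw [Finset.sum_congr rfl h1]
          rw [Finset.sum_comm]
          have h2 : ∀ i : Fin (s+1), ∑ j ∈ range (r+1),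
              (phi (r+1) (HC i) (1+j) + (s:ℝ) * phi (r+1) (HC i) j)
              = T i + (s:ℝ) * (T i - 1) := by
            intro i
            rw [Finset.sum_add_distrib, ← Finset.mul_sum, htel1 i, htel2 i]
          rw [Finset.sum_congr rfl (fun i _ => h2 i)]
          rw [Finset.sum_add_distrib, ← Finset.mul_sum]
          have h3 : ∑ i : Fin (s+1), (T i - 1) = (∑ i, T i) - ((s:ℝ)+1) := by
            rw [Finset.sum_sub_distrib, Finset.sum_const, card_univ, Fintype.card_fin,
              nsmul_eq_mul, mul_one]
            push_cast
            ring
          rw [h3]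
          ring
        have hwinsum : ∑ i0 : Fin (s+1),
            (∑ j ∈ range (r+1), ∑ i, phi (r+1) (HC i) ((if i = i0 then 1 else 0) + j))
            ≤ ((s:ℝ)+1) * ((s:ℝ) * ((r:ℝ)+1)) := by
          have h1 := Finset.sum_le_sum (fun i0 (_ : i0 ∈ univ) => hwin i0)
          rw [Finset.sum_const, card_univ, Fintype.card_fin, nsmul_eq_mul] at h1
          push_cast at h1
          linarith
        have hTbound : ∑ i, T i ≤ (s:ℝ) * ((r:ℝ)+2) := by
          rw [hsum] at hwinsum
          have hsp : (0:ℝ) < (s:ℝ)+1 := by positivity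
          nlinarith [hwinsum]
        -- finish
        have hfin : ∑ ℓ ∈ range (r+1+1), ∑ i, phi (r+1) (H i) ℓ ≤ ∑ i, T i := by
          have h1 : ∑ ℓ ∈ range (r+1+1), ∑ i, phi (r+1) (H i) ℓ
              ≤ ∑ ℓ ∈ range (r+1+1), ∑ i, phi (r+1) (HC i) ℓ := by
            apply Finset.sum_le_sum
            intro ℓ hℓ
            exact Finset.sum_le_sum (fun i _ => hmono i ℓ hℓ)
          have h2 : ∑ ℓ ∈ range (r+1+1), ∑ i : Fin (s+1), phi (r+1) (HC i) ℓ
              = ∑ i : Fin (s+1), T i := Finset.sum_comm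
          exact h1.trans (le_of_eq h2)
        push_cast
        push_cast at hfin hTbound
        linarith

end ML4

theorem stmt_2 (n r s : ℕ) (hr : r ≤ n) (F : Fin s → Finset (Finset ℕ))
    (hsub : ∀ i, ∀ A ∈ F i, A ⊆ Finset.range n)
    (hcross : CrossDep F)
    (k : Fin s → ℕ) (hk : (∑ i, k i) + r = n) :
    ∑ j ∈ Finset.range (r + 1), ∑ i, phi n (F i) (k i + j) ≤
      ((r : ℝ) + 1) * ((s : ℝ) - 1) := by
  have := ML3.reduction k hk (ML4.Kthm s r) F hsub hcross
  linarith
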